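/- Let U ⊆ E be a subspace and S : U → U⊥ a linear map, and let Γ_S := { u + S u : u ∈ U } ⊆ E be its graph. Then δ(Γ_S, U) = ‖S‖ (1 + ‖S‖²)^{−1/2}. -/

import Mathlib

open Module Submodule

noncomputable section

variable {E : Type*} [NormedAddCommGroup E] [InnerProductSpace ℝ E] [FiniteDimensional ℝ E]

/-- The orthogonal projection onto a subspace `U`, viewed as a continuous linear
endomorphism of `E`. -/
noncomputable def projCLM (U : Submodule ℝ E) : E →L[ℝ] E :=
  U.subtypeL.comp (orthogonalProjection U)

/-- The gap `δ(U,V) := ‖P_U - P_V ∘ P_U‖` between two subspaces. -/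
noncomputable def gap (U V : Submodule ℝ E) : ℝ :=
  ‖projCLM U - (projCLM V).comp (projCLM U)‖

private lemma le_of_sq_le_sq' {a b : ℝ} (h : a ^ 2 ≤ b ^ 2) (hb : 0 ≤ b) : a ≤ b :=
  calc a ≤ |a| := le_abs_self a
    _ = Real.sqrt (a ^ 2) := (Real.sqrt_sq_eq_abs a).symm
    _ ≤ Real.sqrt (b ^ 2) := Real.sqrt_le_sqrt h
    _ = b := Real.sqrt_sq hb

/-- For a subspace `U ⊆ E` and a linear map `S : U → U⊥` with graph
`Γ_S = {u + S u : u ∈ U}`, one has `δ(Γ_S, U) = ‖S‖ (1 + ‖S‖²)^{-1/2}`. -/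
theorem gap_graph (U : Submodule ℝ E) (S : ↥U →L[ℝ] ↥Uᗮ) :
    gap (LinearMap.range ((U.subtypeL + Uᗮ.subtypeL.comp S : ↥U →L[ℝ] E) : ↥U →ₗ[ℝ] E)) U
      = ‖S‖ / Real.sqrt (1 + ‖S‖ ^ 2) := by
  set Γ : Submodule ℝ E := LinearMap.range ((U.subtypeL + Uᗮ.subtypeL.comp S : ↥U →L[ℝ] E) : ↥U →ₗ[ℝ] E) with hΓ
  have sqpos : 0 < Real.sqrt (1 + ‖S‖ ^ 2) := Real.sqrt_pos.2 (by positivity)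
  set c : ℝ := ‖S‖ / Real.sqrt (1 + ‖S‖ ^ 2) with hc
  set T : E →L[ℝ] E := projCLM Γ - (projCLM U).comp (projCLM Γ) with hT
  have hmem : ∀ u : U, ((u : E) + (S u : E)) ∈ Γ := by
    intro u
    refine ⟨u, ?_⟩
    simp [ContinuousLinearMap.add_apply]
  have hproj : ∀ u : U, orthogonalProjection U ((u : E) + (S u : E)) = u := by
    intro u
    rw [map_add, orthogonalProjection_mem_subspace_eq_self,
      Submodule.orthogonalProjectionOnto_apply_of_mem_orthogonal (S u).2, add_zero]
  have hpyth : ∀ u : U, ‖(u : E) + (S u : E)‖ ^ 2 = ‖u‖ ^ 2 + ‖S u‖ ^ 2 := by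
    intro u
    rw [norm_add_sq_real, Submodule.inner_right_of_mem_orthogonal u.2 (S u).2]
    norm_num
  have hTapply : ∀ (x : E) (u : U),
      ((u : E) + (S u : E)) = (orthogonalProjection Γ x : E) → T x = (S u : E) := by
    intro x u hu
    have h1 : T x = (orthogonalProjection Γ x : E)
        - (orthogonalProjection U ((orthogonalProjection Γ x : E)) : E) := by
      simp [hT, projCLM]
    rw [h1, ← hu, hproj u]
    abel
  have hub : ‖T‖ ≤ c := by
    apply ContinuousLinearMap.opNorm_le_bound _ (by positivity)
    intro x
    obtain ⟨u, hu⟩ : ∃ u : U, ((u : E) + (S u : E)) = (orthogonalProjection Γ x : E) := by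
      obtain ⟨u, hu⟩ := (orthogonalProjection Γ x).2
      refine ⟨u, ?_⟩
      simpa [ContinuousLinearMap.add_apply] using hu
    have hTx : T x = (S u : E) := hTapply x u hu
    have h1 : ‖(orthogonalProjection Γ x : E)‖ ≤ ‖x‖ :=
      calc ‖(orthogonalProjection Γ x : E)‖ = ‖orthogonalProjection Γ x‖ := rfl
        _ ≤ ‖orthogonalProjection Γ‖ * ‖x‖ := (orthogonalProjection Γ).le_opNorm x
        _ ≤ 1 * ‖x‖ :=
            mul_le_mul_of_nonneg_right (orthogonalProjection_norm_le Γ) (norm_nonneg x)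
        _ = ‖x‖ := one_mul _
    have key : ‖S u‖ ≤ c * ‖(u : E) + (S u : E)‖ := by
      rw [hc, div_mul_eq_mul_div, le_div_iff₀ sqpos]
      refine le_of_sq_le_sq' ?_ (by positivity)
      rw [mul_pow, mul_pow, Real.sq_sqrt (by positivity), hpyth u]
      have hSu : ‖S u‖ ≤ ‖S‖ * ‖u‖ := S.le_opNorm u
      nlinarith [norm_nonneg (S u), norm_nonneg u, norm_nonneg S]
    calc ‖T x‖ = ‖S u‖ := by rw [hTx]; rfl
      _ ≤ c * ‖(u : E) + (S u : E)‖ := key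
      _ = c * ‖(orthogonalProjection Γ x : E)‖ := by rw [hu]
      _ ≤ c * ‖x‖ := mul_le_mul_of_nonneg_left h1 (by positivity)
  have hlb : c ≤ ‖T‖ := by
    rw [hc, div_le_iff₀ sqpos]
    apply ContinuousLinearMap.opNorm_le_bound _ (by positivity)
    intro u
    have hx : ((u : E) + (S u : E)) = (orthogonalProjection Γ ((u : E) + (S u : E)) : E) :=
      (Submodule.starProjection_eq_self_iff.2 (hmem u)).symm
    have hTx : T ((u : E) + (S u : E)) = (S u : E) := hTapply _ u hx
    have h1 : ‖S u‖ ≤ ‖T‖ * ‖(u : E) + (S u : E)‖ := by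
      have := T.le_opNorm ((u : E) + (S u : E))
      rw [hTx] at this
      exact this
    have h2 : ‖(u : E) + (S u : E)‖ ≤ Real.sqrt (1 + ‖S‖ ^ 2) * ‖u‖ := by
      refine le_of_sq_le_sq' ?_ (by positivity)
      rw [mul_pow, Real.sq_sqrt (by positivity), hpyth u]
      have hSu : ‖S u‖ ≤ ‖S‖ * ‖u‖ := S.le_opNorm u
      nlinarith [norm_nonneg (S u), norm_nonneg u, norm_nonneg S]
    calc ‖S u‖ ≤ ‖T‖ * ‖(u : E) + (S u : E)‖ := h1
      _ ≤ ‖T‖ * (Real.sqrt (1 + ‖S‖ ^ 2) * ‖u‖) :=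
          mul_le_mul_of_nonneg_left h2 (norm_nonneg T)
      _ = ‖T‖ * Real.sqrt (1 + ‖S‖ ^ 2) * ‖u‖ := by ring
  rw [gap]
  exact le_antisymm hub hlb
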